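/- Let Ω ⊂ ℝⁿ be bounded measurable with diam(Ω) ≤ 1, p ∈ [1,∞), h ∈ (0,1/2], and v ∈ L^p(Ω) extended by zero. With σ_z(x) = h/(|x−z|+h) and s = n/p, one has ∫_Ω ‖σ_z^{n/p} v‖_{L^p(Ω)}^p dz ≤ C(n) |log h| h^n ‖v‖_{L^p(Ω)}^p. -/

import Mathlib

open MeasureTheory Real Metric

lemma key_integral_bound (n : ℕ) : ∃ C > (0:ℝ), ∀ h : ℝ, 0 < h → h ≤ 1/2 →
    ∀ (x : EuclideanSpace ℝ (Fin n)) (Ω : Set (EuclideanSpace ℝ (Fin n))), MeasurableSet Ω →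
      Ω ⊆ closedBall x 1 →
      (∫ z in Ω, (h / (‖x - z‖ + h)) ^ n) ≤ C * |Real.log h| * h ^ n := by
  set E := EuclideanSpace ℝ (Fin n)
  set ω : ℝ := (volume (closedBall (0 : E) 1)).toReal with hω
  have hωpos : 0 < ω := by
    refine ENNReal.toReal_pos (ne_of_gt (measure_closedBall_pos volume _ one_pos)) ?_
    exact (isCompact_closedBall _ _).measure_lt_top.ne
  refine ⟨ω * (2 ^ (n+1) + 1) / Real.log 2, by positivity, ?_⟩
  intro h hh0 hh2 x Ω hmΩ hΩsub
  set g : E → ℝ := fun z => (h / (‖x - z‖ + h)) ^ n with hg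
  have hgc : Continuous g := by
    have hd : Continuous fun z : E => ‖x - z‖ + h :=
      ((continuous_const.sub continuous_id).norm).add continuous_const
    exact (continuous_const.div hd (fun z => by positivity)).pow n
  have hg0 : ∀ z, 0 ≤ g z := fun z => by positivity
  have hg1 : ∀ z, g z ≤ 1 := by
    intro z
    apply pow_le_one₀ (by positivity)
    rw [div_le_one (by positivity)]
    nlinarith [norm_nonneg (x - z)]
  have hvol : ∀ r : ℝ, 0 ≤ r → (volume (closedBall x r)).toReal = r ^ n * ω := by
    intro r hr
    rw [Measure.addHaar_closedBall' volume x hr, ENNReal.toReal_mul,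
      ENNReal.toReal_ofReal (by positivity), finrank_euclideanSpace_fin]
  have hfin : ∀ r : ℝ, volume (closedBall x r) < ⊤ :=
    fun r => (isCompact_closedBall _ _).measure_lt_top
  -- generic bound on pieces
  have hbound : ∀ (S : Set E) (M r : ℝ), 0 ≤ r → 0 ≤ M → S ⊆ closedBall x r →
      (∀ z ∈ S, g z ≤ M) → (∫ z in S, g z) ≤ M * (r ^ n * ω) := by
    intro S M r hr hM hS hgM
    have hnorm : ‖∫ z in S, g z‖ ≤ M * (volume S).toReal := by
      refine norm_setIntegral_le_of_norm_le_const
        (lt_of_le_of_lt (measure_mono hS) (hfin r)) ?_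
      intro z hz
      rw [Real.norm_eq_abs, abs_of_nonneg (hg0 z)]
      exact hgM z hz
    rw [Real.norm_eq_abs] at hnorm
    calc (∫ z in S, g z) ≤ |∫ z in S, g z| := le_abs_self _
      _ ≤ M * (volume S).toReal := hnorm
      _ ≤ M * (r ^ n * ω) := by
          refine mul_le_mul_of_nonneg_left ?_ hM
          rw [← hvol r hr]
          exact ENNReal.toReal_mono (hfin r).ne (measure_mono hS)
  have hgint : IntegrableOn g (closedBall x 1) :=
    hgc.continuousOn.integrableOn_compact (isCompact_closedBall _ _)
  -- step estimate
  have hstep : ∀ k : ℕ, (∫ z in closedBall x ((1/2:ℝ)^k), g z) ≤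
      (∫ z in closedBall x ((1/2:ℝ)^(k+1)), g z) + 2 ^ n * h ^ n * ω := by
    intro k
    have hrk : (0:ℝ) < (1/2:ℝ)^k := by positivity
    have hrk1 : (0:ℝ) < (1/2:ℝ)^(k+1) := by positivity
    have hsub : closedBall x ((1/2:ℝ)^(k+1)) ⊆ closedBall x ((1/2:ℝ)^k) :=
      closedBall_subset_closedBall (by
        apply pow_le_pow_of_le_one (by norm_num) (by norm_num); omega)
    have hsub1 : closedBall x ((1/2:ℝ)^k) ⊆ closedBall x 1 :=
      closedBall_subset_closedBall (pow_le_one₀ (by norm_num) (by norm_num))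
    have hunion : closedBall x ((1/2:ℝ)^(k+1)) ∪
        (closedBall x ((1/2:ℝ)^k) \ closedBall x ((1/2:ℝ)^(k+1))) =
        closedBall x ((1/2:ℝ)^k) := Set.union_diff_cancel hsub
    rw [← hunion, setIntegral_union Set.disjoint_sdiff_right
      ((measurableSet_closedBall.diff measurableSet_closedBall))
      (hgint.mono_set (hsub.trans hsub1)) (hgint.mono_set (Set.diff_subset.trans hsub1))]
    gcongr
    have key : (∫ z in closedBall x ((1/2:ℝ)^k) \ closedBall x ((1/2:ℝ)^(k+1)), g z) ≤
        ((2:ℝ)^(k+1) * h) ^ n * (((1/2:ℝ)^k) ^ n * ω) := by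
      refine hbound _ _ _ hrk.le (by positivity) Set.diff_subset ?_
      intro z hz
      have hz2 : (1/2:ℝ)^(k+1) < dist z x := by
        by_contra hcon
        exact hz.2 (mem_closedBall.2 (le_of_not_gt hcon))
      have hd : (1/2:ℝ)^(k+1) ≤ ‖x - z‖ + h := by
        rw [dist_eq_norm, ← norm_neg, neg_sub] at hz2
        nlinarith
      apply pow_le_pow_left₀ (by positivity)
      rw [div_le_iff₀ (by positivity)]
      calc h = ((2:ℝ)^(k+1) * h) * (1/2:ℝ)^(k+1) := by
              rw [mul_comm ((2:ℝ)^(k+1)) h, mul_assoc]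
              rw [div_pow, one_pow, mul_one_div, div_self (by positivity), mul_one]
        _ ≤ ((2:ℝ)^(k+1) * h) * (‖x - z‖ + h) := by
              apply mul_le_mul_of_nonneg_left hd (by positivity)
    refine key.trans (le_of_eq ?_)
    rw [← mul_assoc, ← mul_pow, ← mul_pow]
    congr 2
    rw [pow_succ]
    field_simp
    rw [← mul_pow]; norm_num
  -- telescoping
  have htel : ∀ k : ℕ, (∫ z in closedBall x 1, g z) ≤
      (∫ z in closedBall x ((1/2:ℝ)^k), g z) + k * (2 ^ n * h ^ n * ω) := by
    intro k
    induction k with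
    | zero => simp
    | succ k ih =>
        refine ih.trans ?_
        push_cast
        have := hstep k
        linarith
  -- choose K
  set K : ℕ := ⌈Real.logb 2 (1/h)⌉₊ with hK
  have hlogh : Real.log h < 0 := Real.log_neg hh0 (by linarith)
  have hL : |Real.log h| = -Real.log h := abs_of_neg hlogh
  have hlog2 : (0:ℝ) < Real.log 2 := Real.log_pos (by norm_num)
  have hlogb_nonneg : 0 ≤ Real.logb 2 (1/h) := by
    apply Real.logb_nonneg (by norm_num)
    rw [le_div_iff₀ hh0]; linarith
  have hlogb_eq : Real.logb 2 (1/h) = |Real.log h| / Real.log 2 := by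
    rw [Real.logb, Real.log_div one_ne_zero (ne_of_gt hh0), Real.log_one, hL]
    ring
  have hlog2L : Real.log 2 ≤ |Real.log h| := by
    rw [hL]
    have := Real.log_le_log hh0 hh2
    rw [show (1/2:ℝ) = 2⁻¹ by norm_num, Real.log_inv] at this
    linarith
  have hKle : (K:ℝ) ≤ 2 * |Real.log h| / Real.log 2 := by
    have h1 : (K:ℝ) < Real.logb 2 (1/h) + 1 := Nat.ceil_lt_add_one hlogb_nonneg
    rw [hlogb_eq] at h1
    have h2 : (1:ℝ) ≤ |Real.log h| / Real.log 2 := (one_le_div hlog2).2 hlog2L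
    have : 2 * |Real.log h| / Real.log 2 = |Real.log h| / Real.log 2 + |Real.log h| / Real.log 2 := by
      ring
    rw [this]
    linarith
  have hrK : (1/2:ℝ)^K ≤ h := by
    have h1 : Real.logb 2 (1/h) ≤ (K:ℝ) := Nat.le_ceil _
    have h2 : (1/h : ℝ) ≤ (2:ℝ)^K := by
      calc (1/h : ℝ) = (2:ℝ) ^ (Real.logb 2 (1/h)) :=
            (Real.rpow_logb (by norm_num) (by norm_num) (by positivity)).symm
        _ ≤ (2:ℝ) ^ (K:ℝ) := Real.rpow_le_rpow_of_exponent_le (by norm_num) h1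
        _ = (2:ℝ)^K := by rw [Real.rpow_natCast]
    rw [div_pow, one_pow]
    rw [one_div] at h2
    rw [div_le_iff₀ (by positivity)]
    rw [inv_le_iff_one_le_mul₀ hh0] at h2
    linarith [h2]
  -- final estimate
  have hΩ : (∫ z in Ω, g z) ≤ ∫ z in closedBall x 1, g z := by
    apply setIntegral_mono_set hgint (Filter.Eventually.of_forall hg0)
    exact Filter.Eventually.of_forall hΩsub
  have hlast : (∫ z in closedBall x ((1/2:ℝ)^K), g z) ≤ h ^ n * ω := by
    have := hbound (closedBall x ((1/2:ℝ)^K)) 1 ((1/2:ℝ)^K) (by positivity) zero_le_one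
      (subset_refl _) (fun z _ => hg1 z)
    rw [one_mul] at this
    refine this.trans ?_
    have : ((1/2:ℝ)^K) ^ n ≤ h ^ n := pow_le_pow_left₀ (by positivity) hrK n
    nlinarith
  have hmain : (∫ z in Ω, g z) ≤ h ^ n * ω + K * (2 ^ n * h ^ n * ω) := by
    have := htel K
    linarith
  refine hmain.trans ?_
  have hq1 : (1:ℝ) ≤ |Real.log h| / Real.log 2 := (one_le_div hlog2).2 hlog2L
  have hfac : 1 + (K:ℝ) * 2 ^ n ≤ (2 ^ (n+1) + 1) * (|Real.log h| / Real.log 2) := by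
    have h2n : (0:ℝ) ≤ 2 ^ n := by positivity
    have hKle' : (K:ℝ) ≤ 2 * (|Real.log h| / Real.log 2) := by
      rw [show 2 * (|Real.log h| / Real.log 2) = 2 * |Real.log h| / Real.log 2 by ring]
      exact hKle
    have h3 := mul_le_mul_of_nonneg_right hKle' h2n
    have h4 : (2:ℝ) ^ (n+1) = 2 ^ n * 2 := pow_succ 2 n
    nlinarith [h3, hq1]
  calc h ^ n * ω + (K:ℝ) * (2 ^ n * h ^ n * ω) = (h ^ n * ω) * (1 + (K:ℝ) * 2 ^ n) := by ring
    _ ≤ (h ^ n * ω) * ((2 ^ (n+1) + 1) * (|Real.log h| / Real.log 2)) :=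
        mul_le_mul_of_nonneg_left hfac (by positivity)
    _ = ω * (2 ^ (n+1) + 1) / Real.log 2 * |Real.log h| * h ^ n := by
        field_simp
private abbrev Eu (n : ℕ) := EuclideanSpace ℝ (Fin n)

theorem stmt6 (n : ℕ) :
    ∃ C > (0:ℝ), ∀ (Ω : Set (EuclideanSpace ℝ (Fin n))), MeasurableSet Ω →
      Bornology.IsBounded Ω → EMetric.diam Ω ≤ 1 →
      ∀ p h : ℝ, 1 ≤ p → 0 < h → h ≤ 1/2 →
      ∀ v : EuclideanSpace ℝ (Fin n) → ℝ, (∀ x ∉ Ω, v x = 0) →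
        MemLp v (ENNReal.ofReal p) (volume.restrict Ω) →
        (∫ z in Ω, ∫ x in Ω, ((h / (‖x - z‖ + h)) ^ ((n : ℝ) / p)) ^ p * |v x| ^ p) ≤
          C * |Real.log h| * h ^ n * ∫ x in Ω, |v x| ^ p := by
  obtain ⟨C, hCpos, hC⟩ := key_integral_bound n
  refine ⟨C, hCpos, ?_⟩
  intro Ω hmΩ hbdd hdiam p h hp hh0 hh2 v hv0 hvmem
  have hp0 : (0:ℝ) < p := lt_of_lt_of_le one_pos hp
  -- rewrite rpow into nat pow
  have hrw : ∀ z x : Eu n, ((h / (‖x - z‖ + h)) ^ ((n : ℝ) / p)) ^ p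
      = (h / (‖x - z‖ + h)) ^ n := by
    intro z x
    rw [← Real.rpow_natCast (h / (‖x - z‖ + h)) n, ← Real.rpow_mul (by positivity),
      div_mul_cancel₀ _ (ne_of_gt hp0)]
  simp_rw [hrw]
  -- basic integrability facts
  haveI : IsFiniteMeasure (volume.restrict Ω) :=
    ⟨by rw [Measure.restrict_apply_univ]; exact hbdd.measure_lt_top (μ := volume)⟩
  have hw : Integrable (fun x => |v x| ^ p) (volume.restrict Ω) := by
    have := hvmem.integrable_norm_rpow (by simp [ENNReal.ofReal_eq_zero]; linarith)
      ENNReal.ofReal_ne_top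
    simpa [ENNReal.toReal_ofReal hp0.le, Real.norm_eq_abs] using this
  have hwnn : ∀ x, 0 ≤ |v x| ^ p := fun x => Real.rpow_nonneg (abs_nonneg _) _
  -- the kernel
  set F : Eu n × Eu n → ℝ := fun q => (h / (‖q.2 - q.1‖ + h)) ^ n * |v q.2| ^ p with hF
  have hker_cont : Continuous fun q : Eu n × Eu n => (h / (‖q.2 - q.1‖ + h)) ^ n := by
    have hd : Continuous fun q : Eu n × Eu n => ‖q.2 - q.1‖ + h :=
      ((continuous_snd.sub continuous_fst).norm).add continuous_const
    exact (continuous_const.div hd (fun q => by positivity)).pow n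
  have hker_le_one : ∀ q : Eu n × Eu n, (h / (‖q.2 - q.1‖ + h)) ^ n ≤ 1 := by
    intro q
    apply pow_le_one₀ (by positivity)
    rw [div_le_one (by positivity)]
    nlinarith [norm_nonneg (q.2 - q.1)]
  have hker_nn : ∀ q : Eu n × Eu n, 0 ≤ (h / (‖q.2 - q.1‖ + h)) ^ n := fun q => by positivity
  have hFmeas : AEStronglyMeasurable F
      ((volume.restrict Ω).prod (volume.restrict Ω)) :=
    hker_cont.aestronglyMeasurable.mul hw.1.comp_snd
  have hFint : Integrable F ((volume.restrict Ω).prod (volume.restrict Ω)) := by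
    have hdom : Integrable (fun q : Eu n × Eu n => (1:ℝ) * |v q.2| ^ p)
        ((volume.restrict Ω).prod (volume.restrict Ω)) :=
      (integrable_const (1:ℝ)).mul_prod hw
    refine Integrable.mono' (by simpa using hdom) hFmeas ?_
    refine Filter.Eventually.of_forall fun q => ?_
    rw [Real.norm_eq_abs, abs_of_nonneg (mul_nonneg (hker_nn q) (hwnn q.2))]
    calc (h / (‖q.2 - q.1‖ + h)) ^ n * |v q.2| ^ p ≤ 1 * |v q.2| ^ p :=
          mul_le_mul_of_nonneg_right (hker_le_one q) (hwnn q.2)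
      _ = |v q.2| ^ p := one_mul _
  -- Fubini
  have hswap : (∫ z in Ω, ∫ x in Ω, (h / (‖x - z‖ + h)) ^ n * |v x| ^ p)
      = ∫ x in Ω, ∫ z in Ω, (h / (‖x - z‖ + h)) ^ n * |v x| ^ p :=
    integral_integral_swap (f := fun z x => (h / (‖x - z‖ + h)) ^ n * |v x| ^ p) hFint
  rw [hswap]
  -- pull constants out of inner integral
  have hpull : ∀ x : Eu n, (∫ z in Ω, (h / (‖x - z‖ + h)) ^ n * |v x| ^ p)
      = (∫ z in Ω, (h / (‖x - z‖ + h)) ^ n) * |v x| ^ p := fun x =>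
    integral_mul_const _ _
  simp_rw [hpull]
  -- pointwise bound
  have hpt : ∀ x ∈ Ω, (∫ z in Ω, (h / (‖x - z‖ + h)) ^ n) * |v x| ^ p
      ≤ (C * |Real.log h| * h ^ n) * |v x| ^ p := by
    intro x hx
    refine mul_le_mul_of_nonneg_right ?_ (hwnn x)
    refine hC h hh0 hh2 x Ω hmΩ ?_
    intro z hz
    rw [Metric.mem_closedBall]
    have h1 : edist z x ≤ 1 := le_trans (EMetric.edist_le_diam_of_mem hz hx) hdiam
    have := ENNReal.toReal_mono (by simp) h1
    simpa [dist_edist] using this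
  -- integrate the bound
  have hLHSint : Integrable (fun x => (∫ z in Ω, (h / (‖x - z‖ + h)) ^ n) * |v x| ^ p)
      (volume.restrict Ω) := by
    have := hFint.integral_prod_right
    simpa [hpull, hF] using this
  calc (∫ x in Ω, (∫ z in Ω, (h / (‖x - z‖ + h)) ^ n) * |v x| ^ p)
      ≤ ∫ x in Ω, (C * |Real.log h| * h ^ n) * |v x| ^ p :=
        setIntegral_mono_on hLHSint (hw.const_mul _) hmΩ hpt
    _ = C * |Real.log h| * h ^ n * ∫ x in Ω, |v x| ^ p := integral_const_mul _ _
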